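/- Fix M ∈ ℂ^{n×n} and ε > 0, and let M' = M ⊕ εN ⊕ εN ∈ ℂ^{(n+4)×(n+4)} where N = [[0,2],[0,0]]. For θ ∈ [0,2π) write w_j(θ) = w_j(H(e^{−iθ} M')) for j = 1,2,3. Then sup_{θ ∈ [0,2π)} w₁(θ)/w₃(θ) ≤ ‖M'‖/ε, where ‖·‖ is the operator norm. (In particular w₃(θ) ≥ 2ε > 0 for every θ.) -/

import Mathlib

open MeasureTheory Matrix Filter
open scoped Pointwise

noncomputable section

/-- Operator (spectral) norm of a square complex matrix. -/
def opNorm {m : ℕ} (M : Matrix (Fin m) (Fin m) ℂ) : ℝ :=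
  ‖Matrix.toEuclideanCLM (𝕜 := ℂ) M‖

/-- Block-diagonal direct sum of square matrices. -/
def dsum {a b : ℕ} (A : Matrix (Fin a) (Fin a) ℂ) (B : Matrix (Fin b) (Fin b) ℂ) :
    Matrix (Fin (a + b)) (Fin (a + b)) ℂ :=
  Matrix.reindex finSumFinEquiv finSumFinEquiv (Matrix.fromBlocks A 0 0 B)

/-- The nilpotent matrix `N = [[0,2],[0,0]]`. -/
def Nmat : Matrix (Fin 2) (Fin 2) ℂ := !![0, 2; 0, 0]

/-- The regularization `M' = M ⊕ εN ⊕ εN`. -/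
def Mprime {n : ℕ} (M : Matrix (Fin n) (Fin n) ℂ) (ε : ℝ) :
    Matrix (Fin (n + 4)) (Fin (n + 4)) ℂ :=
  Matrix.reindex (finCongr (by omega)) (finCongr (by omega))
    (dsum (dsum M ((ε : ℂ) • Nmat)) ((ε : ℂ) • Nmat))

/-- Hermitian part `H(B) = (B + B*)/2`. -/
def hermPart {m : ℕ} (B : Matrix (Fin m) (Fin m) ℂ) : Matrix (Fin m) (Fin m) ℂ :=
  (1 / 2 : ℂ) • (B + Bᴴ)

lemma hermPart_isHermitian {m : ℕ} (B : Matrix (Fin m) (Fin m) ℂ) :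
    (hermPart B).IsHermitian := by
  unfold hermPart
  rw [Matrix.IsHermitian, Matrix.conjTranspose_smul, Matrix.conjTranspose_add,
    Matrix.conjTranspose_conjTranspose]
  rw [add_comm]
  norm_num

/-- `k`-th largest eigenvalue (1-indexed) of the Hermitian part of a square complex
matrix; junk value `0` out of range. -/
def lamDesc {m : ℕ} (B : Matrix (Fin m) (Fin m) ℂ) (k : ℕ) : ℝ :=
  if h : 1 ≤ k ∧ k ≤ m then
    (((hermPart_isHermitian B).eigenvalues ∘
        Tuple.sort (hermPart_isHermitian B).eigenvalues) ⟨m - k, by omega⟩)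
  else 0

/-- `w₁(H(B)) = λ₁ − λ_m` for the Hermitian part of `B`. -/
def w1 {m : ℕ} (B : Matrix (Fin m) (Fin m) ℂ) : ℝ := lamDesc B 1 - lamDesc B m

/-- `w₂(H(B)) = ((λ₂ − λ_m)⁻¹ + (λ₁ − λ_{m−1})⁻¹)⁻¹` for the Hermitian part of `B`. -/
def w2 {m : ℕ} (B : Matrix (Fin m) (Fin m) ℂ) : ℝ :=
  ((lamDesc B 2 - lamDesc B m)⁻¹ + (lamDesc B 1 - lamDesc B (m - 1))⁻¹)⁻¹

/-- `w₃(H(B)) = λ₂ − λ_{m−1}` for the Hermitian part of `B`. -/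
def w3 {m : ℕ} (B : Matrix (Fin m) (Fin m) ℂ) : ℝ := lamDesc B 2 - lamDesc B (m - 1)

end

section AuxLemmas
open Polynomial

set_option synthInstance.maxHeartbeats 1000000
set_option maxHeartbeats 2000000

namespace Stmt6Aux

lemma charpoly_conj_aux {m : Type*} [Fintype m] [DecidableEq m] {R : Type*} [CommRing R]
    (U D V : Matrix m m R) (hUV : U * V = 1) :
    (U * D * V).charpoly = D.charpoly := by
  have hmap : (C : R →+* R[X]).mapMatrix U * (C : R →+* R[X]).mapMatrix V = 1 := by
    rw [← _root_.map_mul, hUV, _root_.map_one]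
  have hcomm := (Matrix.scalar_commute (X : R[X]) (fun r => Commute.all _ _)
      ((C : R →+* R[X]).mapMatrix V)).eq
  have hcm : Matrix.charmatrix (U * D * V)
      = (C : R →+* R[X]).mapMatrix U * Matrix.charmatrix D * (C : R →+* R[X]).mapMatrix V := by
    unfold Matrix.charmatrix
    rw [_root_.map_mul, _root_.map_mul, mul_sub, sub_mul]
    congr 1
    rw [mul_assoc, hcomm, ← mul_assoc, hmap, one_mul]
  unfold Matrix.charpoly
  rw [hcm, Matrix.det_mul, Matrix.det_mul]
  have hdet : ((C : R →+* R[X]).mapMatrix U).det * ((C : R →+* R[X]).mapMatrix V).det = 1 := by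
    rw [← Matrix.det_mul, hmap, Matrix.det_one]
  calc ((C : R →+* R[X]).mapMatrix U).det * (Matrix.charmatrix D).det
      * ((C : R →+* R[X]).mapMatrix V).det
      = (Matrix.charmatrix D).det * (((C : R →+* R[X]).mapMatrix U).det
        * ((C : R →+* R[X]).mapMatrix V).det) := by ring
    _ = (Matrix.charmatrix D).det := by rw [hdet, mul_one]

lemma charpoly_diag {m : Type*} [Fintype m] [DecidableEq m] {R : Type*} [CommRing R]
    (d : m → R) : (Matrix.diagonal d).charpoly = ∏ i, (X - C (d i)) := by
  have h : Matrix.charmatrix (Matrix.diagonal d) = Matrix.diagonal (fun i => X - C (d i)) := by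
    ext i j
    by_cases h : i = j
    · subst h; simp
    · simp [h, Matrix.diagonal_apply_ne _ h]
  rw [Matrix.charpoly, h, Matrix.det_diagonal]

lemma isHermitian_charpoly_eq {m : ℕ} {A : Matrix (Fin m) (Fin m) ℂ} (hA : A.IsHermitian) :
    A.charpoly = ∏ i, (X - C ((hA.eigenvalues i : ℝ) : ℂ)) := by
  conv_lhs => rw [hA.spectral_theorem, Unitary.conjStarAlgAut_apply]
  rw [charpoly_conj_aux _ _ _
    ((Matrix.mem_unitaryGroup_iff).mp (hA.eigenvectorUnitary).2), charpoly_diag]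
  rfl

lemma count_eigenvalues {m : ℕ} {A : Matrix (Fin m) (Fin m) ℂ} (hA : A.IsHermitian)
    (μ : ℝ) (t : ℕ) (h : (X - C (μ : ℂ)) ^ t ∣ A.charpoly) :
    t ≤ (Finset.univ.filter (fun i => hA.eigenvalues i = μ)).card := by
  have hne : A.charpoly ≠ 0 := A.charpoly_monic.ne_zero
  have ht : t ≤ rootMultiplicity (μ : ℂ) A.charpoly := (le_rootMultiplicity_iff hne).mpr h
  rw [← count_roots] at ht
  have hroots : A.charpoly.roots
      = Finset.univ.val.map (fun i => ((hA.eigenvalues i : ℝ) : ℂ)) := by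
    rw [isHermitian_charpoly_eq hA]
    rw [show (∏ i, (X - C ((hA.eigenvalues i : ℝ) : ℂ)))
        = ((Finset.univ.val.map (fun i => ((hA.eigenvalues i : ℝ) : ℂ))).map
            (fun a => X - C a)).prod by rw [Multiset.map_map]; rfl]
    exact roots_multiset_prod_X_sub_C _
  rw [hroots, Multiset.count_map] at ht
  refine le_trans ht (le_of_eq ?_)
  rw [show (Finset.univ.filter (fun i => hA.eigenvalues i = μ)).card
      = Multiset.card (Finset.univ.val.filter (fun i => hA.eigenvalues i = μ)) from rfl]
  congr 1
  apply Multiset.filter_congr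
  intro x _
  constructor
  · intro h'; exact_mod_cast h'.symm
  · intro h'; exact_mod_cast h'.symm

lemma smul_dsum {a b : ℕ} (c : ℂ) (A : Matrix (Fin a) (Fin a) ℂ)
    (B : Matrix (Fin b) (Fin b) ℂ) : c • dsum A B = dsum (c • A) (c • B) := by
  unfold dsum
  have h : Matrix.fromBlocks (c • A) (0 : Matrix (Fin a) (Fin b) ℂ) 0 (c • B)
      = c • Matrix.fromBlocks A 0 0 B := by
    rw [Matrix.fromBlocks_smul]; simp
  rw [Matrix.reindex_apply, Matrix.reindex_apply, h, Matrix.submatrix_smul]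
  rfl

lemma smul_reindex {a b : ℕ} (c : ℂ) (e : Fin a ≃ Fin b) (A : Matrix (Fin a) (Fin a) ℂ) :
    c • (Matrix.reindex e e A) = Matrix.reindex e e (c • A) := by
  rw [Matrix.reindex_apply, Matrix.reindex_apply, Matrix.submatrix_smul]
  rfl

lemma hermPart_reindex {a b : ℕ} (e : Fin a ≃ Fin b) (A : Matrix (Fin a) (Fin a) ℂ) :
    hermPart (Matrix.reindex e e A) = Matrix.reindex e e (hermPart A) := by
  unfold hermPart
  rw [Matrix.conjTranspose_reindex, Matrix.reindex_apply, Matrix.reindex_apply,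
    Matrix.reindex_apply, Matrix.submatrix_smul, Matrix.submatrix_add]
  rfl

lemma hermPart_dsum {a b : ℕ} (A : Matrix (Fin a) (Fin a) ℂ) (B : Matrix (Fin b) (Fin b) ℂ) :
    hermPart (dsum A B) = dsum (hermPart A) (hermPart B) := by
  unfold hermPart dsum
  have h : Matrix.fromBlocks ((1 / 2 : ℂ) • (A + Aᴴ)) (0 : Matrix (Fin a) (Fin b) ℂ) 0
        ((1 / 2 : ℂ) • (B + Bᴴ))
      = (1 / 2 : ℂ) • (Matrix.fromBlocks A 0 0 B + (Matrix.fromBlocks A 0 0 B)ᴴ) := by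
    rw [Matrix.fromBlocks_conjTranspose, Matrix.fromBlocks_add, Matrix.fromBlocks_smul]
    simp
  rw [Matrix.reindex_apply, Matrix.reindex_apply, Matrix.conjTranspose_submatrix, h,
    Matrix.submatrix_smul]
  rfl

lemma charpoly_dsum {a b : ℕ} (A : Matrix (Fin a) (Fin a) ℂ) (B : Matrix (Fin b) (Fin b) ℂ) :
    (dsum A B).charpoly = A.charpoly * B.charpoly := by
  unfold dsum
  rw [Matrix.charpoly_reindex, Matrix.charpoly_fromBlocks_zero₂₁]

lemma hermPart_scaledN (c : ℂ) (ε : ℝ) :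
    hermPart (c • ((ε : ℂ) • Nmat))
      = !![0, (ε : ℂ) * c; (ε : ℂ) * (starRingEnd ℂ) c, 0] := by
  unfold hermPart Nmat
  ext i j
  fin_cases i <;> fin_cases j <;>
    simp [Matrix.conjTranspose_apply, Matrix.smul_apply] <;> ring

lemma charpoly_off (a b : ℂ) : (!![0, a; b, 0]).charpoly = X ^ 2 - C (a * b) := by
  rw [Matrix.charpoly, Matrix.det_fin_two]
  simp [Matrix.charmatrix_apply_eq, Matrix.charmatrix_apply_ne]
  ring

lemma sorted_ge {m : ℕ} (f : Fin m → ℝ) (μ : ℝ)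
    (h : 2 ≤ (Finset.univ.filter fun i => μ ≤ f i).card) (k : Fin m) (hk : (k : ℕ) = m - 2) :
    μ ≤ (f ∘ Tuple.sort f) k := by
  have himg : (Finset.univ.filter fun j => μ ≤ f (Tuple.sort f j))
      = (Finset.univ.filter fun i => μ ≤ f i).image (Tuple.sort f).symm := by
    ext j
    simp only [Finset.mem_filter, Finset.mem_image, Finset.mem_univ, true_and]
    constructor
    · intro hj; exact ⟨Tuple.sort f j, hj, by simp⟩
    · rintro ⟨i, hi, rfl⟩; simpa using hi
  have hcard : 2 ≤ (Finset.univ.filter fun j => μ ≤ f (Tuple.sort f j)).card := by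
    rw [himg, Finset.card_image_of_injective _ (Equiv.injective _)]; exact h
  obtain ⟨a, ha, b, hb, hab⟩ := Finset.one_lt_card.mp (lt_of_lt_of_le one_lt_two hcard)
  simp only [Finset.mem_filter, Finset.mem_univ, true_and] at ha hb
  have hne : (a : ℕ) ≠ (b : ℕ) := fun hh => hab (Fin.ext hh)
  have hb' := b.isLt
  have ha' := a.isLt
  rcases lt_or_gt_of_ne hne with h' | h'
  · have hak : a ≤ k := by rw [Fin.le_def]; omega
    exact le_trans ha (Tuple.monotone_sort f hak)
  · have hbk : b ≤ k := by rw [Fin.le_def]; omega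
    exact le_trans hb (Tuple.monotone_sort f hbk)

lemma sorted_le {m : ℕ} (f : Fin m → ℝ) (μ : ℝ)
    (h : 2 ≤ (Finset.univ.filter fun i => f i ≤ μ).card) (k : Fin m) (hk : (k : ℕ) = 1) :
    (f ∘ Tuple.sort f) k ≤ μ := by
  have himg : (Finset.univ.filter fun j => f (Tuple.sort f j) ≤ μ)
      = (Finset.univ.filter fun i => f i ≤ μ).image (Tuple.sort f).symm := by
    ext j
    simp only [Finset.mem_filter, Finset.mem_image, Finset.mem_univ, true_and]
    constructor
    · intro hj; exact ⟨Tuple.sort f j, hj, by simp⟩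
    · rintro ⟨i, hi, rfl⟩; simpa using hi
  have hcard : 2 ≤ (Finset.univ.filter fun j => f (Tuple.sort f j) ≤ μ).card := by
    rw [himg, Finset.card_image_of_injective _ (Equiv.injective _)]; exact h
  obtain ⟨a, ha, b, hb, hab⟩ := Finset.one_lt_card.mp (lt_of_lt_of_le one_lt_two hcard)
  simp only [Finset.mem_filter, Finset.mem_univ, true_and] at ha hb
  have hne : (a : ℕ) ≠ (b : ℕ) := fun hh => hab (Fin.ext hh)
  rcases lt_or_gt_of_ne hne with h' | h'
  · have hbk : k ≤ b := by rw [Fin.le_def]; omega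
    exact le_trans (Tuple.monotone_sort f hbk) hb
  · have hak : k ≤ a := by rw [Fin.le_def]; omega
    exact le_trans (Tuple.monotone_sort f hak) ha

open scoped Matrix.Norms.L2Operator in
lemma eig_abs_le {m : ℕ} (hm : 0 < m) {A : Matrix (Fin m) (Fin m) ℂ} (hA : A.IsHermitian)
    (i : Fin m) : |hA.eigenvalues i| ≤ ‖A‖ := by
  haveI : Nonempty (Fin m) := ⟨⟨0, hm⟩⟩
  haveI hnt : Nontrivial (EuclideanSpace ℂ (Fin m)) := by
    refine ⟨EuclideanSpace.single ⟨0, hm⟩ 1, 0, fun hcon => ?_⟩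
    have := congrFun (congrArg (fun v : EuclideanSpace ℂ (Fin m) => (v : Fin m → ℂ)) hcon) ⟨0, hm⟩
    simp [EuclideanSpace.single] at this
  haveI : NormOneClass (Matrix (Fin m) (Fin m) ℂ) := by
    refine ⟨?_⟩
    rw [Matrix.cstar_norm_def, _root_.map_one]
    exact norm_one
  have h2 : ((hA.eigenvalues i : ℝ) : ℂ) ∈ spectrum ℂ A :=
    spectrum.algebraMap_mem ℂ (hA.eigenvalues_mem_spectrum_real i)
  have h3 := spectrum.norm_le_norm_of_mem h2
  simpa using h3

open scoped Matrix.Norms.L2Operator in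
lemma norm_hermPart_le {m : ℕ} (B : Matrix (Fin m) (Fin m) ℂ) :
    ‖hermPart B‖ ≤ ‖B‖ := by
  unfold hermPart
  calc ‖(1 / 2 : ℂ) • (B + Bᴴ)‖ = ‖(1 / 2 : ℂ)‖ * ‖B + Bᴴ‖ := norm_smul _ _
    _ ≤ (1 / 2) * (‖B‖ + ‖Bᴴ‖) := by
        rw [show ‖(1 / 2 : ℂ)‖ = 1 / 2 by norm_num]
        gcongr
        exact norm_add_le _ _
    _ = ‖B‖ := by rw [Matrix.l2_opNorm_conjTranspose]; ring

lemma hermPart_smul_Mprime {n : ℕ} (c : ℂ) (M : Matrix (Fin n) (Fin n) ℂ) (ε : ℝ) :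
    hermPart (c • Mprime M ε)
      = Matrix.reindex (finCongr (by omega)) (finCongr (by omega))
          (dsum (dsum (hermPart (c • M)) (hermPart (c • ((ε : ℂ) • Nmat))))
            (hermPart (c • ((ε : ℂ) • Nmat)))) := by
  unfold Mprime
  rw [smul_reindex, hermPart_reindex, smul_dsum, hermPart_dsum, smul_dsum, hermPart_dsum]

lemma charpoly_D (c : ℂ) (hc : Complex.normSq c = 1) (ε : ℝ) :
    (hermPart (c • ((ε : ℂ) • Nmat))).charpoly = (X - C (ε : ℂ)) * (X + C (ε : ℂ)) := by
  rw [hermPart_scaledN, charpoly_off]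
  have hcc : c * (starRingEnd ℂ) c = 1 := by
    rw [Complex.mul_conj, hc]; simp
  have h1 : ((ε : ℂ) * c) * ((ε : ℂ) * (starRingEnd ℂ) c) = (ε : ℂ) ^ 2 := by
    calc ((ε : ℂ) * c) * ((ε : ℂ) * (starRingEnd ℂ) c)
        = (ε : ℂ) ^ 2 * (c * (starRingEnd ℂ) c) := by ring
      _ = (ε : ℂ) ^ 2 := by rw [hcc, mul_one]
  rw [h1, show C ((ε : ℂ) ^ 2) = (C (ε : ℂ)) ^ 2 from map_pow _ _ _]
  ring

lemma counts {n : ℕ} (c : ℂ) (hc : Complex.normSq c = 1) (M : Matrix (Fin n) (Fin n) ℂ)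
    (ε : ℝ) :
    2 ≤ (Finset.univ.filter (fun i =>
        (hermPart_isHermitian (c • Mprime M ε)).eigenvalues i = ε)).card ∧
    2 ≤ (Finset.univ.filter (fun i =>
        (hermPart_isHermitian (c • Mprime M ε)).eigenvalues i = -ε)).card := by
  have hch : (hermPart (c • Mprime M ε)).charpoly
      = (hermPart (c • M)).charpoly *
          ((X - C (ε : ℂ)) * (X + C (ε : ℂ)) * ((X - C (ε : ℂ)) * (X + C (ε : ℂ)))) := by
    rw [hermPart_smul_Mprime, Matrix.charpoly_reindex, charpoly_dsum, charpoly_dsum,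
      charpoly_D c hc, mul_assoc]
  constructor
  · refine count_eigenvalues _ ε 2 ⟨(hermPart (c • M)).charpoly * (X + C (ε : ℂ)) ^ 2, ?_⟩
    rw [hch]; ring
  · refine count_eigenvalues _ (-ε) 2 ⟨(hermPart (c • M)).charpoly * (X - C (ε : ℂ)) ^ 2, ?_⟩
    rw [hch]
    simp only [Complex.ofReal_neg, map_neg]
    ring

lemma lamDesc_eq {m : ℕ} (B : Matrix (Fin m) (Fin m) ℂ) (k : ℕ) (hk : 1 ≤ k ∧ k ≤ m)
    (j : Fin m) (hj : (j : ℕ) = m - k) :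
    lamDesc B k = ((hermPart_isHermitian B).eigenvalues ∘
      Tuple.sort (hermPart_isHermitian B).eigenvalues) j := by
  rw [lamDesc, dif_pos hk]
  congr 1
  exact Fin.ext (by simp [hj])


lemma normSq_exp_theta (θ : ℝ) :
    Complex.normSq (Complex.exp (-(θ : ℂ) * Complex.I)) = 1 := by
  have h1 : ‖Complex.exp (-(θ : ℂ) * Complex.I)‖ = 1 := by
    rw [Complex.norm_exp]; simp
  rw [← Complex.sq_norm, h1]; norm_num

open scoped Matrix.Norms.L2Operator in
lemma main_aux {n : ℕ} (M : Matrix (Fin n) (Fin n) ℂ) (ε : ℝ) (hε : 0 < ε)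
    (c : ℂ) (hc : Complex.normSq c = 1) :
    2 * ε ≤ w3 (c • Mprime M ε) ∧
      w1 (c • Mprime M ε) / w3 (c • Mprime M ε) ≤ opNorm (Mprime M ε) / ε := by
  have hcn : ‖c‖ = 1 := by
    have h := Complex.sq_norm c
    rw [hc] at h
    have habs1 : ‖c‖ = 1 := by nlinarith [norm_nonneg c]
    simpa using habs1
  obtain ⟨hcnt1, hcnt2⟩ := counts c hc M ε
  have hmono : Monotone ((hermPart_isHermitian (c • Mprime M ε)).eigenvalues ∘
      Tuple.sort (hermPart_isHermitian (c • Mprime M ε)).eigenvalues) :=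
    Tuple.monotone_sort _
  have hg2 : ε ≤ ((hermPart_isHermitian (c • Mprime M ε)).eigenvalues ∘
      Tuple.sort (hermPart_isHermitian (c • Mprime M ε)).eigenvalues) ⟨n + 2, by omega⟩ := by
    apply sorted_ge
    · refine le_trans hcnt1 (Finset.card_le_card ?_)
      intro i hi
      simp only [Finset.mem_filter, Finset.mem_univ, true_and] at hi ⊢
      exact le_of_eq hi.symm
    · show n + 2 = n + 4 - 2
      omega
  have hg1 : ((hermPart_isHermitian (c • Mprime M ε)).eigenvalues ∘
      Tuple.sort (hermPart_isHermitian (c • Mprime M ε)).eigenvalues) ⟨1, by omega⟩ ≤ -ε := by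
    apply sorted_le
    · refine le_trans hcnt2 (Finset.card_le_card ?_)
      intro i hi
      simp only [Finset.mem_filter, Finset.mem_univ, true_and] at hi ⊢
      exact le_of_eq hi
    · rfl
  have habs : ∀ j : Fin (n + 4),
      |(hermPart_isHermitian (c • Mprime M ε)).eigenvalues j| ≤ ‖Mprime M ε‖ := by
    intro j
    refine le_trans (eig_abs_le (by omega) _ j) ?_
    calc ‖hermPart (c • Mprime M ε)‖ ≤ ‖c • Mprime M ε‖ := norm_hermPart_le _
      _ = ‖Mprime M ε‖ := by rw [norm_smul, hcn, one_mul]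
  have e1 : lamDesc (c • Mprime M ε) 1
      = ((hermPart_isHermitian (c • Mprime M ε)).eigenvalues ∘
        Tuple.sort (hermPart_isHermitian (c • Mprime M ε)).eigenvalues) ⟨n + 3, by omega⟩ :=
    lamDesc_eq _ 1 ⟨le_refl 1, by omega⟩ _ (by show n + 3 = n + 4 - 1; omega)
  have e2 : lamDesc (c • Mprime M ε) 2
      = ((hermPart_isHermitian (c • Mprime M ε)).eigenvalues ∘
        Tuple.sort (hermPart_isHermitian (c • Mprime M ε)).eigenvalues) ⟨n + 2, by omega⟩ :=
    lamDesc_eq _ 2 ⟨by omega, by omega⟩ _ (by show n + 2 = n + 4 - 2; omega)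
  have e3 : lamDesc (c • Mprime M ε) (n + 4 - 1)
      = ((hermPart_isHermitian (c • Mprime M ε)).eigenvalues ∘
        Tuple.sort (hermPart_isHermitian (c • Mprime M ε)).eigenvalues) ⟨1, by omega⟩ :=
    lamDesc_eq _ (n + 4 - 1) ⟨by omega, by omega⟩ _ (by show 1 = n + 4 - (n + 4 - 1); omega)
  have e4 : lamDesc (c • Mprime M ε) (n + 4)
      = ((hermPart_isHermitian (c • Mprime M ε)).eigenvalues ∘
        Tuple.sort (hermPart_isHermitian (c • Mprime M ε)).eigenvalues) ⟨0, by omega⟩ :=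
    lamDesc_eq _ (n + 4) ⟨by omega, by omega⟩ _ (by show 0 = n + 4 - (n + 4); omega)
  have hw3 : 2 * ε ≤ w3 (c • Mprime M ε) := by
    unfold w3
    rw [e2, e3]
    linarith
  have hw1le : w1 (c • Mprime M ε) ≤ 2 * ‖Mprime M ε‖ := by
    unfold w1
    rw [e1, e4]
    have h1 := habs (Tuple.sort
      ((hermPart_isHermitian (c • Mprime M ε)).eigenvalues) ⟨n + 3, by omega⟩)
    have h2 := habs (Tuple.sort
      ((hermPart_isHermitian (c • Mprime M ε)).eigenvalues) ⟨0, by omega⟩)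
    rw [abs_le] at h1 h2
    simp only [Function.comp_apply]
    linarith [h1.2, h2.1]
  have hw1nonneg : 0 ≤ w1 (c • Mprime M ε) := by
    unfold w1
    rw [e1, e4]
    have := hmono (show (⟨0, by omega⟩ : Fin (n + 4)) ≤ ⟨n + 3, by omega⟩ from
      Fin.mk_le_mk.mpr (by omega))
    linarith
  refine ⟨hw3, ?_⟩
  have hw3pos : 0 < w3 (c • Mprime M ε) := lt_of_lt_of_le (by positivity) hw3
  have hop : opNorm (Mprime M ε) = ‖Mprime M ε‖ := rfl
  rw [hop]
  calc w1 (c • Mprime M ε) / w3 (c • Mprime M ε)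
      ≤ w1 (c • Mprime M ε) / (2 * ε) := by gcongr
    _ ≤ (2 * ‖Mprime M ε‖) / (2 * ε) := by gcongr
    _ = ‖Mprime M ε‖ / ε := by rw [mul_div_mul_left _ _ (two_ne_zero)]

end Stmt6Aux
end AuxLemmas

/-- control of the `L^∞` factor: for `M' = M ⊕ εN ⊕ εN`,
`sup_θ w₁(θ)/w₃(θ) ≤ ‖M'‖/ε`, and in particular `w₃(θ) ≥ 2ε` for every `θ`,
where `w_j(θ) = w_j(H(e^{−iθ}M'))`. -/
theorem stmt6 (n : ℕ) (M : Matrix (Fin n) (Fin n) ℂ) (ε : ℝ) (hε : 0 < ε) :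
    (∀ θ ∈ Set.Ico (0 : ℝ) (2 * Real.pi),
      2 * ε ≤ w3 (Complex.exp (-(θ : ℂ) * Complex.I) • Mprime M ε)) ∧
    (∀ θ ∈ Set.Ico (0 : ℝ) (2 * Real.pi),
      w1 (Complex.exp (-(θ : ℂ) * Complex.I) • Mprime M ε) /
          w3 (Complex.exp (-(θ : ℂ) * Complex.I) • Mprime M ε) ≤
        opNorm (Mprime M ε) / ε) := by
  constructor
  · intro θ _
    exact (Stmt6Aux.main_aux M ε hε _ (Stmt6Aux.normSq_exp_theta θ)).1
  · intro θ _
    exact (Stmt6Aux.main_aux M ε hε _ (Stmt6Aux.normSq_exp_theta θ)).2
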